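/- Let K be a field of characteristic zero, s ≥ 1, and let A be the algebra of differential polynomials in x and u^k_j with total derivative D. Let Q, γ ∈ A^s satisfy γ'(Q) = γ'^†(Q) and γ'(Q) + Q'^†(γ) = 0 (i.e., the Lie derivative of the covector γ along Q vanishes and the required symmetry holds). Then Q·γ lies in the image of D, i.e., Q·γ = D(g) for some g ∈ A. -/

import Mathlib

/-- The algebra of differential polynomials in `x` (the variable `none`) and
`u^k_j = X (some (k, j))`, `1 ≤ k ≤ s`, `j ≥ 0`, over a field `K`. -/
abbrev DiffPoly (K : Type*) [Field K] (s : ℕ) : Type _ :=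
  MvPolynomial (Option (Fin s × ℕ)) K

/-- The directional derivative: `(γ'(P))_l = Σ_{j≥0} Σ_k (∂γ_l/∂u^k_j)·D^j(P_k)`. -/
noncomputable def dirDeriv {K : Type*} [Field K] {s : ℕ}
    (D : Derivation K (DiffPoly K s) (DiffPoly K s))
    (γ P : Fin s → DiffPoly K s) (l : Fin s) : DiffPoly K s :=
  ∑ᶠ j : ℕ, ∑ k : Fin s,
    MvPolynomial.pderiv (some (k, j)) (γ l) * (⇑D)^[j] (P k)

/-- The formal-adjoint action:
`(γ'^†(P))_k = Σ_{j≥0} Σ_l (−1)^j D^j((∂γ_l/∂u^k_j)·P_l)`. -/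
noncomputable def adjDeriv {K : Type*} [Field K] {s : ℕ}
    (D : Derivation K (DiffPoly K s) (DiffPoly K s))
    (γ P : Fin s → DiffPoly K s) (k : Fin s) : DiffPoly K s :=
  ∑ᶠ j : ℕ, ∑ l : Fin s, (-1 : DiffPoly K s) ^ j *
    (⇑D)^[j] (MvPolynomial.pderiv (some (k, j)) (γ l) * P l)

namespace Stmt11Aux

open MvPolynomial

variable {K : Type*} [Field K] {s : ℕ}

/-- The weight function: `x` has weight 0, each `u^k_j` has weight 1. -/
def W (s : ℕ) : Option (Fin s × ℕ) → ℕ := fun i => Option.elim i 0 (fun _ => 1)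

@[simp] lemma W_none : W s none = 0 := rfl
@[simp] lemma W_some (p : Fin s × ℕ) : W s (some p) = 1 := rfl

lemma iterD_eq (D : Derivation K (DiffPoly K s) (DiffPoly K s)) (j : ℕ) (a : DiffPoly K s) :
    (⇑D)^[j] a = (D.toLinearMap ^ j) a := by
  rw [Module.End.pow_apply]; rfl

/-- Integration by parts. -/
lemma ibp (D : Derivation K (DiffPoly K s) (DiffPoly K s)) (a : DiffPoly K s) (j : ℕ) :
    ∀ b : DiffPoly K s, ∃ h, (⇑D)^[j] a * b
      = (-1 : DiffPoly K s) ^ j * (a * (⇑D)^[j] b) + D h := by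
  induction j with
  | zero => intro b; exact ⟨0, by simp⟩
  | succ j ih =>
    intro b
    obtain ⟨h, hh⟩ := ih (D b)
    refine ⟨(⇑D)^[j] a * b - h, ?_⟩
    have leib : D ((⇑D)^[j] a * b) = D ((⇑D)^[j] a) * b + (⇑D)^[j] a * D b := by
      rw [D.leibniz]; ring_nf
    rw [map_sub, Function.iterate_succ_apply', Function.iterate_succ_apply _ j b,
      leib]
    rw [hh]
    ring

/-- `D^[j]` applied to `X (some (k,0))` gives `X (some (k,j))`. -/
lemma iterD_X (D : Derivation K (DiffPoly K s) (DiffPoly K s))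
    (hu : ∀ (k : Fin s) (j : ℕ),
      D (MvPolynomial.X (some (k, j))) = MvPolynomial.X (some (k, j + 1)))
    (k : Fin s) (j : ℕ) : (⇑D)^[j] (X (some (k, 0))) = X (some (k, j)) := by
  induction j with
  | zero => rfl
  | succ j ih => rw [Function.iterate_succ_apply', ih, hu]

/-- A common finite set of derivative orders outside of which all partials vanish. -/
lemma exists_J (f : DiffPoly K s) :
    ∃ J : Finset ℕ, ∀ (k : Fin s) (j : ℕ), j ∉ J → some (k, j) ∉ f.vars := by
  refine ⟨f.vars.image (fun i => Option.elim i 0 Prod.snd), fun k j hj hmem => ?_⟩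
  exact hj (Finset.mem_image_of_mem _ hmem)

lemma pderiv_zero_of_J {f : DiffPoly K s} {J : Finset ℕ}
    (hJ : ∀ (k : Fin s) (j : ℕ), j ∉ J → some (k, j) ∉ f.vars)
    {k : Fin s} {j : ℕ} (hj : j ∉ J) : pderiv (some (k, j)) f = 0 :=
  pderiv_eq_zero_of_notMem_vars (hJ k j hj)


@[simp] lemma iterD_zero (D : Derivation K (DiffPoly K s) (DiffPoly K s)) (j : ℕ) :
    (⇑D)^[j] (0 : DiffPoly K s) = 0 := by
  rw [iterD_eq]; exact map_zero _

/-- The variational derivative with respect to `u^k`. -/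
noncomputable def varD (D : Derivation K (DiffPoly K s) (DiffPoly K s))
    (k : Fin s) (f : DiffPoly K s) : DiffPoly K s :=
  ∑ᶠ j : ℕ, (-1 : DiffPoly K s) ^ j * (⇑D)^[j] (pderiv (some (k, j)) f)

lemma lemmaA (D : Derivation K (DiffPoly K s) (DiffPoly K s))
    (Q γ : Fin s → DiffPoly K s) (k : Fin s) :
    varD D k (∑ l, Q l * γ l) = adjDeriv D Q γ k + adjDeriv D γ Q k := by
  classical
  choose JQ hJQ using fun l => exists_J (Q l)
  choose JG hJG using fun l => exists_J (γ l)
  set J : Finset ℕ := Finset.univ.biUnion (fun l => JQ l ∪ JG l) with hJdef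
  have hQ0 : ∀ (l : Fin s) (k : Fin s) (j : ℕ), j ∉ J → pderiv (some (k, j)) (Q l) = 0 := by
    intro l k j hj
    refine pderiv_eq_zero_of_notMem_vars (hJQ l k j fun hmem => hj ?_)
    exact Finset.mem_biUnion.2 ⟨l, Finset.mem_univ l, Finset.mem_union_left _ hmem⟩
  have hG0 : ∀ (l : Fin s) (k : Fin s) (j : ℕ), j ∉ J → pderiv (some (k, j)) (γ l) = 0 := by
    intro l k j hj
    refine pderiv_eq_zero_of_notMem_vars (hJG l k j fun hmem => hj ?_)
    exact Finset.mem_biUnion.2 ⟨l, Finset.mem_univ l, Finset.mem_union_right _ hmem⟩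
  have h1 : varD D k (∑ l, Q l * γ l)
      = ∑ j ∈ J, (-1 : DiffPoly K s) ^ j *
          (⇑D)^[j] (pderiv (some (k, j)) (∑ l, Q l * γ l)) := by
    refine finsum_eq_sum_of_support_subset _ fun j hj => ?_
    by_contra hjJ
    apply hj
    simp only [map_sum, pderiv_mul, hQ0 _ _ _ hjJ, hG0 _ _ _ hjJ, zero_mul, mul_zero, add_zero,
      Finset.sum_const_zero, iterD_zero, mul_zero, Set.mem_setOf_eq]
  have h2 : adjDeriv D Q γ k
      = ∑ j ∈ J, ∑ l, (-1 : DiffPoly K s) ^ j *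
          (⇑D)^[j] (pderiv (some (k, j)) (Q l) * γ l) := by
    refine finsum_eq_sum_of_support_subset _ fun j hj => ?_
    by_contra hjJ
    apply hj
    simp only [hQ0 _ _ _ hjJ, zero_mul, iterD_zero, mul_zero, Finset.sum_const_zero,
      Set.mem_setOf_eq]
  have h3 : adjDeriv D γ Q k
      = ∑ j ∈ J, ∑ l, (-1 : DiffPoly K s) ^ j *
          (⇑D)^[j] (pderiv (some (k, j)) (γ l) * Q l) := by
    refine finsum_eq_sum_of_support_subset _ fun j hj => ?_
    by_contra hjJ
    apply hj
    simp only [hG0 _ _ _ hjJ, zero_mul, iterD_zero, mul_zero, Finset.sum_const_zero,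
      Set.mem_setOf_eq]
  rw [varD] at h1 ⊢
  rw [h1, h2, h3, ← Finset.sum_add_distrib]
  refine Finset.sum_congr rfl fun j hj => ?_
  rw [← Finset.sum_add_distrib]
  simp only [map_sum, pderiv_mul, iterD_eq, map_add, Finset.mul_sum]
  refine Finset.sum_congr rfl fun l _ => ?_
  rw [mul_comm (Q l) (pderiv (some (k, j)) (γ l))]
  ring


lemma X_mul_pderiv_monomial (i : Option (Fin s × ℕ)) (m : Option (Fin s × ℕ) →₀ ℕ) (c : K) :
    X i * pderiv i (monomial m c) = (m i) • monomial m c := by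
  classical
  rw [pderiv_monomial, show (X i : DiffPoly K s) = monomial (Finsupp.single i 1) 1 from rfl,
    monomial_mul]
  by_cases h : m i = 0
  · simp [h]
  · have hm : Finsupp.single i 1 + (m - Finsupp.single i 1) = m := by
      ext a
      by_cases ha : a = i
      · subst ha
        simp only [Finsupp.add_apply, Finsupp.single_eq_same, Finsupp.tsub_apply]
        omega
      · simp [Finsupp.single_eq_of_ne ha, Finsupp.tsub_apply,
          Finsupp.single_eq_of_ne ha]
    rw [hm, smul_monomial]
    congr 1
    rw [nsmul_eq_mul]
    ring

lemma count_eq_weight (m : Option (Fin s × ℕ) →₀ ℕ) (J : Finset ℕ)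
    (hm : ∀ (k : Fin s) (j : ℕ), j ∉ J → m (some (k, j)) = 0) :
    ∑ k : Fin s, ∑ j ∈ J, m (some (k, j)) = Finsupp.weight (W s) m := by
  classical
  have h1 : ∑ k : Fin s, ∑ j ∈ J, m (some (k, j))
      = ∑ p ∈ Finset.univ ×ˢ J, m (some p) := by
    rw [Finset.sum_product]
  have h2 : ∑ p ∈ Finset.univ ×ˢ J, m (some p)
      = ∑ i ∈ (Finset.univ ×ˢ J).image some, m i * W s i := by
    rw [Finset.sum_image (fun a _ b _ h => Option.some_injective _ h)]
    exact Finset.sum_congr rfl fun p _ => by simp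
  have h3 : Finsupp.weight (W s) m = ∑ i ∈ m.support, m i * W s i := by
    rw [Finsupp.weight_apply, Finsupp.sum]
    exact Finset.sum_congr rfl fun i _ => by rw [smul_eq_mul]
  rw [h1, h2, h3]
  set T : Finset (Option (Fin s × ℕ)) := (Finset.univ ×ˢ J).image some with hT
  have hTs : ∑ i ∈ T, m i * W s i = ∑ i ∈ T ∪ m.support, m i * W s i := by
    refine Finset.sum_subset_zero_on_sdiff Finset.subset_union_left (fun i hi => ?_)
      (fun _ _ => rfl)
    rw [Finset.mem_sdiff] at hi
    match i with
    | none => simp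
    | some (k, j) =>
      have hjJ : j ∉ J := by
        intro hj
        exact hi.2 (Finset.mem_image_of_mem _ (Finset.mem_product.2 ⟨Finset.mem_univ _, hj⟩))
      rw [hm k j hjJ, zero_mul]
  have hSs : ∑ i ∈ m.support, m i * W s i = ∑ i ∈ T ∪ m.support, m i * W s i := by
    refine Finset.sum_subset_zero_on_sdiff Finset.subset_union_right (fun i hi => ?_)
      (fun _ _ => rfl)
    rw [Finset.mem_sdiff] at hi
    have := Finsupp.notMem_support_iff.1 hi.2
    rw [this, zero_mul]
  rw [hTs, ← hSs]

lemma Nfin_eq (f : DiffPoly K s) (J : Finset ℕ)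
    (hJ : ∀ (k : Fin s) (j : ℕ), j ∉ J → some (k, j) ∉ f.vars) :
    ∑ k : Fin s, ∑ j ∈ J, X (some (k, j)) * pderiv (some (k, j)) f
      = ∑ m ∈ f.support, (Finsupp.weight (W s) m) • monomial m (coeff m f) := by
  classical
  conv_lhs =>
    rw [f.as_sum]
  have step : ∀ (k : Fin s) (j : ℕ),
      X (some (k, j)) * pderiv (some (k, j)) (∑ m ∈ f.support, monomial m (coeff m f))
        = ∑ m ∈ f.support, (m (some (k, j))) • monomial m (coeff m f) := by
    intro k j
    rw [map_sum, Finset.mul_sum]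
    exact Finset.sum_congr rfl fun m _ => X_mul_pderiv_monomial _ _ _
  calc ∑ k : Fin s, ∑ j ∈ J,
        X (some (k, j)) * pderiv (some (k, j)) (∑ m ∈ f.support, monomial m (coeff m f))
      = ∑ m ∈ f.support, ∑ k : Fin s, ∑ j ∈ J, (m (some (k, j))) • monomial m (coeff m f) := by
        simp only [step]
        have inner : ∀ k : Fin s,
            ∑ j ∈ J, ∑ m ∈ f.support, (m (some (k, j))) • monomial m (coeff m f)
              = ∑ m ∈ f.support, ∑ j ∈ J, (m (some (k, j))) • monomial m (coeff m f) :=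
          fun k => Finset.sum_comm
        simp only [inner]
        exact Finset.sum_comm
    _ = ∑ m ∈ f.support, (Finsupp.weight (W s) m) • monomial m (coeff m f) := by
        refine Finset.sum_congr rfl fun m hm => ?_
        have hmJ : ∀ (k : Fin s) (j : ℕ), j ∉ J → m (some (k, j)) = 0 := by
          intro k j hj
          by_contra hne
          exact hJ k j hj ((mem_vars _).2 ⟨m, hm, Finsupp.mem_support_iff.2 hne⟩)
        rw [← count_eq_weight m J hmJ, Finset.sum_smul]
        exact Finset.sum_congr rfl fun k _ => (Finset.sum_smul).symm


/-- Component version of Euler's identity. -/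
lemma comp_euler (f : DiffPoly K s) (J : Finset ℕ)
    (hJ : ∀ (k : Fin s) (j : ℕ), j ∉ J → some (k, j) ∉ f.vars) (d : ℕ) :
    weightedHomogeneousComponent (W s) d
        (∑ k : Fin s, ∑ j ∈ J, X (some (k, j)) * pderiv (some (k, j)) f)
      = d • weightedHomogeneousComponent (W s) d f := by
  classical
  rw [Nfin_eq f J hJ, map_sum, weightedHomogeneousComponent_apply, Finset.smul_sum,
    Finset.sum_filter]
  refine Finset.sum_congr rfl fun m hm => ?_
  have hmon : IsWeightedHomogeneous (W s) (monomial m (coeff m f)) (Finsupp.weight (W s) m) :=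
    isWeightedHomogeneous_monomial _ _ _ rfl
  rw [map_nsmul]
  by_cases h : Finsupp.weight (W s) m = d
  · rw [if_pos h, IsWeightedHomogeneous.weightedHomogeneousComponent_same (h ▸ hmon), h]
  · rw [if_neg h, IsWeightedHomogeneous.weightedHomogeneousComponent_ne _ hmon
      (fun hc => h hc.symm), smul_zero]

lemma homog_pow {p : DiffPoly K s} {e : ℕ} (hp : IsWeightedHomogeneous (W s) p e) (n : ℕ) :
    IsWeightedHomogeneous (W s) (p ^ n) (n * e) := by
  induction n with
  | zero => rw [pow_zero, Nat.zero_mul]; exact isWeightedHomogeneous_one K (W s)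
  | succ n ih =>
    rw [pow_succ]
    have := ih.mul hp
    rwa [show n * e + e = (n + 1) * e by ring] at this

/-- `D` preserves weighted homogeneity. -/
lemma D_homog (D : Derivation K (DiffPoly K s) (DiffPoly K s))
    (hx : D (MvPolynomial.X none) = 1)
    (hu : ∀ (k : Fin s) (j : ℕ),
      D (MvPolynomial.X (some (k, j))) = MvPolynomial.X (some (k, j + 1)))
    {p : DiffPoly K s} {d : ℕ} (hp : IsWeightedHomogeneous (W s) p d) :
    IsWeightedHomogeneous (W s) (D p) d := by
  classical
  have key : ∀ (m : Option (Fin s × ℕ) →₀ ℕ) (c : K),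
      D (monomial m c) ∈ weightedHomogeneousSubmodule K (W s) (Finsupp.weight (W s) m) := by
    intro m
    induction m using Finsupp.induction with
    | zero =>
      intro c
      have h1 : (monomial (0 : Option (Fin s × ℕ) →₀ ℕ) c : DiffPoly K s)
          = algebraMap K (DiffPoly K s) c := by
        rw [C_apply.symm, algebraMap_eq]
      rw [h1, Derivation.map_algebraMap]
      exact Submodule.zero_mem _
    | single_add i b m hi hb ih =>
      intro c
      have hDXi : ∃ e : ℕ, IsWeightedHomogeneous (W s) (D (X i)) e ∧ W s i = e := by
        match i with
        | none => exact ⟨0, by rw [hx]; exact isWeightedHomogeneous_one K (W s), rfl⟩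
        | some (k, j) => exact ⟨1, by rw [hu]; exact isWeightedHomogeneous_X K _ _, rfl⟩
      obtain ⟨e, hDXh, hWe⟩ := hDXi
      have hXpow : IsWeightedHomogeneous (W s) ((X i : DiffPoly K s) ^ b) (b * e) := by
        have := homog_pow (isWeightedHomogeneous_X K (W s) i) b
        rwa [hWe] at this
      have hDpow : IsWeightedHomogeneous (W s) (D ((X i : DiffPoly K s) ^ b)) (b * e) := by
        have h2 : IsWeightedHomogeneous (W s) ((X i : DiffPoly K s) ^ (b - 1) • D (X i))
            ((b - 1) * e + e) := by
          rw [smul_eq_mul]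
          refine IsWeightedHomogeneous.mul ?_ hDXh
          have := homog_pow (isWeightedHomogeneous_X K (W s) i) (b - 1)
          rwa [hWe] at this
        have h3 : (b - 1) * e + e = b * e := by
          have hb1 : 1 ≤ b := Nat.one_le_iff_ne_zero.2 hb
          cases e with
          | zero => simp
          | succ e => nlinarith [Nat.sub_add_cancel hb1]
        rw [h3] at h2
        rw [D.leibniz_pow, ← mem_weightedHomogeneousSubmodule, ← Nat.cast_smul_eq_nsmul K]
        exact Submodule.smul_mem _ _ ((mem_weightedHomogeneousSubmodule _ _ _ _).2 h2)
      rw [monomial_single_add, D.leibniz]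
      have hw : Finsupp.weight (W s) (Finsupp.single i b + m)
          = b * e + Finsupp.weight (W s) m := by
        rw [map_add]
        congr 1
        rw [Finsupp.weight_apply, Finsupp.sum_single_index]
        · rw [smul_eq_mul, hWe]
        · rw [zero_smul]
      rw [hw]
      refine Submodule.add_mem _ ?_ ?_
      · rw [smul_eq_mul, mem_weightedHomogeneousSubmodule]
        exact hXpow.mul ((mem_weightedHomogeneousSubmodule _ _ _ _).1 (ih c))
      · rw [smul_eq_mul, mem_weightedHomogeneousSubmodule, Nat.add_comm]
        exact (isWeightedHomogeneous_monomial _ _ _ rfl).mul hDpow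
  rw [← mem_weightedHomogeneousSubmodule]
  have hDp : D p = ∑ m ∈ p.support, D (monomial m (coeff m p)) := by
    conv_lhs => rw [p.as_sum]
    exact map_sum D.toLinearMap _ _
  rw [hDp]
  refine Submodule.sum_mem _ fun m hm => ?_
  have := key m (coeff m p)
  rwa [hp (mem_support_iff.1 hm)] at this



variable [CharZero K]

lemma Xpow_mem (D : Derivation K (DiffPoly K s) (DiffPoly K s))
    (hx : D (MvPolynomial.X none) = 1) (n : ℕ) :
    (X none : DiffPoly K s) ^ n ∈ LinearMap.range D.toLinearMap := by
  refine ⟨((n : K) + 1)⁻¹ • (X none : DiffPoly K s) ^ (n + 1), ?_⟩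
  have hne : ((n : K) + 1) ≠ 0 := by
    have := Nat.cast_add_one_ne_zero (R := K) n
    push_cast at this
    exact this
  rw [LinearMap.map_smul]
  show ((n : K) + 1)⁻¹ • D ((X none : DiffPoly K s) ^ (n + 1)) = _
  rw [D.leibniz_pow, hx, Nat.succ_sub_one, smul_eq_mul, mul_one,
    ← Nat.cast_smul_eq_nsmul K, smul_smul]
  push_cast
  rw [inv_mul_cancel₀ hne, one_smul]

lemma homog_zero_mem_range (D : Derivation K (DiffPoly K s) (DiffPoly K s))
    (hx : D (MvPolynomial.X none) = 1) {p : DiffPoly K s}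
    (hp : IsWeightedHomogeneous (W s) p 0) :
    p ∈ LinearMap.range D.toLinearMap := by
  classical
  rw [p.as_sum]
  refine Submodule.sum_mem _ fun m hm => ?_
  have hw : Finsupp.weight (W s) m = 0 := hp (mem_support_iff.1 hm)
  have hms : m = Finsupp.single none (m none) := by
    ext a
    match a with
    | none => simp
    | some q =>
      rw [Finsupp.single_eq_of_ne (by simp)]
      by_contra hq
      have hqs : some q ∈ m.support := Finsupp.mem_support_iff.2 hq
      rw [Finsupp.weight_apply, Finsupp.sum] at hw
      have := (Finset.sum_eq_zero_iff).1 hw (some q) hqs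
      rw [smul_eq_mul, W_some, mul_one] at this
      exact hq this
  rw [hms, show (Finsupp.single none (m none) : Option (Fin s × ℕ) →₀ ℕ)
      = Finsupp.single none (m none) + 0 by rw [add_zero], monomial_single_add,
    add_zero, ← hms]
  have : (monomial (0 : Option (Fin s × ℕ) →₀ ℕ)) (coeff m p) = C (coeff m p) := by
    rw [C_apply]
  rw [this, mul_comm, C_mul']
  exact Submodule.smul_mem _ _ (Xpow_mem D hx (m none))


/-- Main auxiliary result: if all variational derivatives of `f` vanish,
then `f` is in the image of `D`. -/
lemma mem_range_of_varD_zero (D : Derivation K (DiffPoly K s) (DiffPoly K s))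
    (hx : D (MvPolynomial.X none) = 1)
    (hu : ∀ (k : Fin s) (j : ℕ),
      D (MvPolynomial.X (some (k, j))) = MvPolynomial.X (some (k, j + 1)))
    (f : DiffPoly K s) (hvar : ∀ k : Fin s, varD D k f = 0) :
    f ∈ LinearMap.range D.toLinearMap := by
  classical
  obtain ⟨J, hJ⟩ := exists_J f
  have hpd0 : ∀ (k : Fin s) (j : ℕ), j ∉ J → pderiv (some (k, j)) f = 0 :=
    fun k j hj => pderiv_eq_zero_of_notMem_vars (hJ k j hj)
  -- Step 1: the Euler operator value is in the range of D
  set Nf : DiffPoly K s := ∑ k : Fin s, ∑ j ∈ J, X (some (k, j)) * pderiv (some (k, j)) f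
    with hNf
  have hterm : ∀ (k : Fin s) (j : ℕ), ∃ h, X (some (k, j)) * pderiv (some (k, j)) f
      = (-1 : DiffPoly K s) ^ j *
          (X (some (k, 0)) * (⇑D)^[j] (pderiv (some (k, j)) f)) + D h := by
    intro k j
    obtain ⟨h, hh⟩ := ibp D (X (some (k, 0))) j (pderiv (some (k, j)) f)
    refine ⟨h, ?_⟩
    rw [← iterD_X D hu k j]
    exact hh
  choose hfun hhfun using hterm
  have hvarsum : ∀ k : Fin s,
      ∑ j ∈ J, (-1 : DiffPoly K s) ^ j * (⇑D)^[j] (pderiv (some (k, j)) f)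
        = varD D k f := by
    intro k
    refine (finsum_eq_sum_of_support_subset _ fun j hj => ?_).symm
    by_contra hjJ
    apply hj
    simp only [hpd0 k j hjJ, iterD_zero, mul_zero, Set.mem_setOf_eq]
  have hNmem : Nf ∈ LinearMap.range D.toLinearMap := by
    have hcalc : Nf = ∑ k : Fin s, X (some (k, 0)) *
        (∑ j ∈ J, (-1 : DiffPoly K s) ^ j * (⇑D)^[j] (pderiv (some (k, j)) f))
        + D (∑ k : Fin s, ∑ j ∈ J, hfun k j) := by
      rw [hNf]
      rw [map_sum D, ← Finset.sum_add_distrib]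
      refine Finset.sum_congr rfl fun k _ => ?_
      rw [map_sum D, Finset.mul_sum, ← Finset.sum_add_distrib]
      refine Finset.sum_congr rfl fun j _ => ?_
      rw [hhfun k j]
      ring
    rw [hcalc]
    have : ∀ k : Fin s, X (some (k, 0)) *
        (∑ j ∈ J, (-1 : DiffPoly K s) ^ j * (⇑D)^[j] (pderiv (some (k, j)) f)) = 0 := by
      intro k
      rw [hvarsum k, hvar k, mul_zero]
    simp only [this, Finset.sum_const_zero, zero_add]
    exact ⟨_, rfl⟩
  obtain ⟨H, hH⟩ := hNmem
  -- Step 2: each weighted homogeneous component of f is in the range of D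
  have hcomp : ∀ d : ℕ, weightedHomogeneousComponent (W s) d f
      ∈ LinearMap.range D.toLinearMap := by
    intro d
    rcases Nat.eq_zero_or_pos d with hd | hd
    · subst hd
      exact homog_zero_mem_range D hx
        (weightedHomogeneousComponent_isWeightedHomogeneous 0 f)
    · -- the component of D H
      have hfin := weightedHomogeneousComponent_finsupp (w := W s) H
      have h5 : D H = ∑ e ∈ hfin.toFinset, D (weightedHomogeneousComponent (W s) e H) := by
        conv_lhs => rw [← sum_weightedHomogeneousComponent (W s) H,
          finsum_eq_sum _ hfin]
        exact map_sum D _ _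
      have h6 : weightedHomogeneousComponent (W s) d (D H)
          = D (weightedHomogeneousComponent (W s) d H) := by
        rw [h5, map_sum]
        rw [Finset.sum_eq_single d]
        · exact IsWeightedHomogeneous.weightedHomogeneousComponent_same
            (D_homog D hx hu (weightedHomogeneousComponent_isWeightedHomogeneous d H))
        · intro e _ hne
          exact IsWeightedHomogeneous.weightedHomogeneousComponent_ne _
            (D_homog D hx hu (weightedHomogeneousComponent_isWeightedHomogeneous e H))
            hne.symm
        · intro hd'
          have h0 : weightedHomogeneousComponent (W s) d H = 0 := by
            by_contra hne
            exact hd' (hfin.mem_toFinset.2 hne)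
          rw [h0, map_zero, map_zero]
      have hDH : (D H : DiffPoly K s) = Nf := by
        rw [← hH]; rfl
      have h7 : (d : K) • weightedHomogeneousComponent (W s) d f
          = D (weightedHomogeneousComponent (W s) d H) := by
        rw [← h6, hDH, hNf, comp_euler f J hJ d, ← Nat.cast_smul_eq_nsmul K]
      have hdK : (d : K) ≠ 0 := Nat.cast_ne_zero.2 (Nat.pos_iff_ne_zero.1 hd)
      have h8 : weightedHomogeneousComponent (W s) d f
          = (d : K)⁻¹ • D (weightedHomogeneousComponent (W s) d H) := by
        rw [← h7, inv_smul_smul₀ hdK]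
      rw [h8]
      exact Submodule.smul_mem _ _ ⟨_, rfl⟩
  -- Step 3: conclude
  rw [← sum_weightedHomogeneousComponent (W s) f,
    finsum_eq_sum _ (weightedHomogeneousComponent_finsupp (w := W s) f)]
  exact Submodule.sum_mem _ fun d _ => hcomp d

end Stmt11Aux


/-- Let `K` be a field of characteristic zero, `s ≥ 1`, `A` the algebra
of differential polynomials with total derivative `D`. Let `Q, γ ∈ A^s` satisfy
`γ'(Q) = γ'^†(Q)` and `γ'(Q) + Q'^†(γ) = 0` (vanishing of the Lie derivative of the
covector `γ` along `Q` together with the required symmetry). Then `Q·γ` lies in the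
image of `D`: `Q·γ = D(g)` for some `g ∈ A`. -/
theorem stmt_11 {K : Type*} [Field K] [CharZero K] (s : ℕ) (hs : 1 ≤ s)
    (D : Derivation K (DiffPoly K s) (DiffPoly K s))
    (hx : D (MvPolynomial.X none) = 1)
    (hu : ∀ (k : Fin s) (j : ℕ),
      D (MvPolynomial.X (some (k, j))) = MvPolynomial.X (some (k, j + 1)))
    (Q γ : Fin s → DiffPoly K s)
    (hsym : ∀ i : Fin s, dirDeriv D γ Q i = adjDeriv D γ Q i)
    (hlie : ∀ i : Fin s, dirDeriv D γ Q i + adjDeriv D Q γ i = 0) :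
    ∃ g : DiffPoly K s, (∑ k, Q k * γ k) = D g := by
  have hvar : ∀ k : Fin s, Stmt11Aux.varD D k (∑ l, Q l * γ l) = 0 := by
    intro k
    rw [Stmt11Aux.lemmaA D Q γ k]
    have h2 := hlie k
    rw [hsym k] at h2
    rw [add_comm (adjDeriv D Q γ k)]
    exact h2
  obtain ⟨g, hg⟩ := Stmt11Aux.mem_range_of_varD_zero D hx hu _ hvar
  exact ⟨g, hg.symm⟩
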